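/- For τ ∈ ℝ and finitely supported v, w : ℤ^d → ℂ, let R_τ(v, w) denote the relation: for every k ∈ ℤ^d, w_k = e^{−iτ|k|²} v_k − i(τ/8) e^{−iτ|k|²} Σ_{−k₁+k₂+k₃=k} (φ₁(2iτ|k₁|²) − φ₂(2iτ|k₁|²)) · (conj(v_{k₁}) + e^{−iτ|k₁|²} conj(w_{k₁})) (v_{k₂} + e^{iτ|k₂|²} w_{k₂}) (v_{k₃} + e^{iτ|k₃|²} w_{k₃}) − i(τ/8) Σ_{−k₁+k₂+k₃=k} φ₂(2iτ|k₁|²) · (e^{−iτ|k₁|²} conj(v_{k₁}) + e^{−2iτ|k₁|²} conj(w_{k₁})) (e^{−iτ|k₂|²} v_{k₂} + w_{k₂}) (e^{−iτ|k₃|²} v_{k₃} + w_{k₃}). Then R is symmetric: for all τ ∈ ℝ and all finitely supported v, w, R_τ(v, w) holds if and only if R_{−τ}(w, v) holds. -/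
import Mathlib


/-- `φ₁(z) = (exp z - 1)/z` for `z ≠ 0`, `φ₁(0) = 1`. -/
noncomputable def phi1 (z : ℂ) : ℂ := if z = 0 then 1 else (Complex.exp z - 1) / z

/-- `φ₂(z) = (exp z - 1 - z)/z²` for `z ≠ 0`, `φ₂(0) = 1/2`. -/
noncomputable def phi2 (z : ℂ) : ℂ :=
  if z = 0 then 1 / 2 else (Complex.exp z - 1 - z) / z ^ 2

/-- `|k|² = k·k` for a frequency `k ∈ ℤ^d`, as a complex number. -/
noncomputable def nsq {d : ℕ} (k : Fin d → ℤ) : ℂ := ∑ i, ((k i : ℂ)) ^ 2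

/-- One step of the second-order resonance-based midpoint scheme for the cubic
nonlinear Schrödinger equation on `𝕋^d`, in Fourier coordinates: `nlsMid2R τ v w`
holds iff for every `k ∈ ℤ^d`,
`w_k = e^{-iτ|k|²} v_k
  - i(τ/8) e^{-iτ|k|²} Σ_{-k₁+k₂+k₃=k} (φ₁(2iτ|k₁|²) - φ₂(2iτ|k₁|²))
      (conj v_{k₁} + e^{-iτ|k₁|²} conj w_{k₁})(v_{k₂} + e^{iτ|k₂|²} w_{k₂})(v_{k₃} + e^{iτ|k₃|²} w_{k₃})
  - i(τ/8) Σ_{-k₁+k₂+k₃=k} φ₂(2iτ|k₁|²)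
      (e^{-iτ|k₁|²} conj v_{k₁} + e^{-2iτ|k₁|²} conj w_{k₁})(e^{-iτ|k₂|²} v_{k₂} + w_{k₂})(e^{-iτ|k₃|²} v_{k₃} + w_{k₃})`,
where the convolution constraint `-k₁+k₂+k₃ = k` has been solved as `k₃ = k + k₁ - k₂`. -/
noncomputable def nlsMid2R {d : ℕ} (τ : ℝ) (v w : (Fin d → ℤ) →₀ ℂ) : Prop :=
  ∀ k : Fin d → ℤ,
    w k = Complex.exp (-(Complex.I * (τ : ℂ) * nsq k)) * v k
      - Complex.I * ((τ : ℂ) / 8) * Complex.exp (-(Complex.I * (τ : ℂ) * nsq k)) *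
          (∑ᶠ k₁ : Fin d → ℤ, ∑ᶠ k₂ : Fin d → ℤ,
            (phi1 (2 * Complex.I * (τ : ℂ) * nsq k₁) -
                phi2 (2 * Complex.I * (τ : ℂ) * nsq k₁)) *
              (((starRingEnd ℂ) (v k₁) +
                  Complex.exp (-(Complex.I * (τ : ℂ) * nsq k₁)) * (starRingEnd ℂ) (w k₁)) *
                (v k₂ + Complex.exp (Complex.I * (τ : ℂ) * nsq k₂) * w k₂) *
                (v (k + k₁ - k₂) +
                  Complex.exp (Complex.I * (τ : ℂ) * nsq (k + k₁ - k₂)) * w (k + k₁ - k₂))))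
      - Complex.I * ((τ : ℂ) / 8) *
          (∑ᶠ k₁ : Fin d → ℤ, ∑ᶠ k₂ : Fin d → ℤ,
            phi2 (2 * Complex.I * (τ : ℂ) * nsq k₁) *
              ((Complex.exp (-(Complex.I * (τ : ℂ) * nsq k₁)) * (starRingEnd ℂ) (v k₁) +
                  Complex.exp (-(2 * Complex.I * (τ : ℂ) * nsq k₁)) * (starRingEnd ℂ) (w k₁)) *
                (Complex.exp (-(Complex.I * (τ : ℂ) * nsq k₂)) * v k₂ + w k₂) *
                (Complex.exp (-(Complex.I * (τ : ℂ) * nsq (k + k₁ - k₂))) * v (k + k₁ - k₂) +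
                  w (k + k₁ - k₂))))

lemma phi_key (z : ℂ) : phi1 z - phi2 z = Complex.exp z * phi2 (-z) := by
  by_cases hz : z = 0
  · subst hz; simp [phi1, phi2]; norm_num
  · have hz' : -z ≠ 0 := neg_ne_zero.mpr hz
    rw [phi1, phi2, phi2, if_neg hz, if_neg hz, if_neg hz']
    have he : Complex.exp (-z) = (Complex.exp z)⁻¹ := Complex.exp_neg z
    rw [he]
    have hE := Complex.exp_ne_zero z
    field_simp
    ring

lemma term_key (t N n₁ n₂ n₃ x₁ y₁ x₂ y₂ x₃ y₃ : ℂ) :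
    (phi1 (2*Complex.I*t*n₁) - phi2 (2*Complex.I*t*n₁)) *
        ((x₁ + Complex.exp (-(Complex.I*t*n₁)) * y₁) * (x₂ + Complex.exp (Complex.I*t*n₂) * y₂) *
          (x₃ + Complex.exp (Complex.I*t*n₃) * y₃))
      + Complex.exp (Complex.I*t*N) *
        (phi2 (2*Complex.I*t*n₁) *
          ((Complex.exp (-(Complex.I*t*n₁)) * x₁ + Complex.exp (-(2*Complex.I*t*n₁)) * y₁) *
           (Complex.exp (-(Complex.I*t*n₂)) * x₂ + y₂) * (Complex.exp (-(Complex.I*t*n₃)) * x₃ + y₃)))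
    = Complex.exp (Complex.I*t*N) *
        ((phi1 (-(2*Complex.I*t*n₁)) - phi2 (-(2*Complex.I*t*n₁))) *
          ((y₁ + Complex.exp (Complex.I*t*n₁) * x₁) * (y₂ + Complex.exp (-(Complex.I*t*n₂)) * x₂) *
            (y₃ + Complex.exp (-(Complex.I*t*n₃)) * x₃)))
      + phi2 (-(2*Complex.I*t*n₁)) *
        ((Complex.exp (Complex.I*t*n₁) * y₁ + Complex.exp (2*Complex.I*t*n₁) * x₁) *
         (Complex.exp (Complex.I*t*n₂) * y₂ + x₂) * (Complex.exp (Complex.I*t*n₃) * y₃ + x₃)) := by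
  have k1 := phi_key (2*Complex.I*t*n₁)
  have k2 := phi_key (-(2*Complex.I*t*n₁))
  rw [neg_neg] at k2
  have h2 : Complex.exp (2*Complex.I*t*n₁) = Complex.exp (Complex.I*t*n₁) ^ 2 := by
    rw [sq, ← Complex.exp_add]; ring_nf
  have h2' : Complex.exp (-(2*Complex.I*t*n₁)) = (Complex.exp (Complex.I*t*n₁) ^ 2)⁻¹ := by
    rw [Complex.exp_neg, h2]
  rw [k1, k2]
  simp only [Complex.exp_neg, h2, h2']
  have h1 := Complex.exp_ne_zero (Complex.I*t*n₁)
  have hq := Complex.exp_ne_zero (Complex.I*t*n₂)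
  have hr := Complex.exp_ne_zero (Complex.I*t*n₃)
  have he := Complex.exp_ne_zero (Complex.I*t*N)
  generalize Complex.exp (Complex.I*t*n₁) = a at h1 ⊢
  generalize Complex.exp (Complex.I*t*n₂) = b at hq ⊢
  generalize Complex.exp (Complex.I*t*n₃) = c at hr ⊢
  generalize Complex.exp (Complex.I*t*N) = e at he ⊢
  generalize phi2 (-(2*Complex.I*t*n₁)) = P
  generalize phi2 (2*Complex.I*t*n₁) = Q
  have hD : a * a ^ 2 * b * c ≠ 0 := by simp [h1, hq, hr]
  field_simp
  ring

lemma sum_conv {d : ℕ} (v w : (Fin d → ℤ) →₀ ℂ) (F : (Fin d → ℤ) → (Fin d → ℤ) → ℂ)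
    (h1 : ∀ a b, v a = 0 → w a = 0 → F a b = 0)
    (h2 : ∀ a b, v b = 0 → w b = 0 → F a b = 0) :
    (∑ᶠ a, ∑ᶠ b, F a b)
      = ∑ a ∈ v.support ∪ w.support, ∑ b ∈ v.support ∪ w.support, F a b := by
  classical
  set s := v.support ∪ w.support with hs
  have hmem : ∀ a : Fin d → ℤ, a ∉ s → v a = 0 ∧ w a = 0 := by
    intro a ha
    rw [hs, Finset.mem_union] at ha
    push_neg at ha
    exact ⟨Finsupp.notMem_support_iff.mp ha.1, Finsupp.notMem_support_iff.mp ha.2⟩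
  have inner : ∀ a, (∑ᶠ b, F a b) = ∑ b ∈ s, F a b := by
    intro a
    apply finsum_eq_sum_of_support_subset
    intro b hb
    by_contra hbs
    exact hb (h2 a b (hmem b hbs).1 (hmem b hbs).2)
  rw [finsum_congr inner]
  apply finsum_eq_sum_of_support_subset
  intro a ha
  by_contra has
  exact ha (Finset.sum_eq_zero fun b _ => h1 a b (hmem a has).1 (hmem a has).2)

lemma step (t N S1 S2 T1 T2 vk wk : ℂ)
    (hsum : S1 + Complex.exp (Complex.I*t*N) * S2 = Complex.exp (Complex.I*t*N) * T1 + T2)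
    (h : wk = Complex.exp (-(Complex.I*t*N)) * vk
        - Complex.I * (t/8) * Complex.exp (-(Complex.I*t*N)) * S1 - Complex.I * (t/8) * S2) :
    vk = Complex.exp (Complex.I*t*N) * wk
        + Complex.I * (t/8) * Complex.exp (Complex.I*t*N) * T1 + Complex.I * (t/8) * T2 := by
  have hE : Complex.exp (Complex.I*t*N) * Complex.exp (-(Complex.I*t*N)) = 1 := by
    rw [← Complex.exp_add]; simp
  linear_combination (-(Complex.exp (Complex.I*t*N))) * h + (Complex.I*(t/8)) * hsum +
    (Complex.I*(t/8) * S1 - vk) * hE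

lemma nlsMid2R_forward {d : ℕ} (τ : ℝ) (v w : (Fin d → ℤ) →₀ ℂ)
    (h : nlsMid2R τ v w) : nlsMid2R (-τ) w v := by
  intro k
  have h' := h k
  rw [sum_conv v w, sum_conv v w] at h'
  rotate_left
  · intro a b e1 e2; simp [e1, e2]
  · intro a b e1 e2; simp [e1, e2]
  · intro a b e1 e2; simp [e1, e2]
  · intro a b e1 e2; simp [e1, e2]
  simp only [Complex.ofReal_neg, neg_div, mul_neg, neg_mul, neg_neg, sub_neg_eq_add]
  rw [sum_conv v w, sum_conv v w]
  rotate_left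
  · intro a b e1 e2; simp [e1, e2]
  · intro a b e1 e2; simp [e1, e2]
  · intro a b e1 e2; simp [e1, e2]
  · intro a b e1 e2; simp [e1, e2]
  refine step (τ : ℂ) (nsq k) _ _ _ _ _ _ ?_ h'
  simp only [Finset.mul_sum]
  rw [← Finset.sum_add_distrib, ← Finset.sum_add_distrib]
  refine Finset.sum_congr rfl fun a _ => ?_
  rw [← Finset.sum_add_distrib, ← Finset.sum_add_distrib]
  refine Finset.sum_congr rfl fun b _ => ?_
  exact term_key (τ : ℂ) (nsq k) (nsq a) (nsq b) (nsq (k + a - b))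
    ((starRingEnd ℂ) (v a)) ((starRingEnd ℂ) (w a)) (v b) (w b) (v (k + a - b)) (w (k + a - b))

/-- The one-step relation of the second-order resonance-based midpoint NLS scheme is
symmetric: `R_τ(v, w)` holds iff `R_{-τ}(w, v)` holds. -/
theorem nlsMid2R_symmetric {d : ℕ} (τ : ℝ) (v w : (Fin d → ℤ) →₀ ℂ) :
    nlsMid2R τ v w ↔ nlsMid2R (-τ) w v := by
  constructor
  · exact nlsMid2R_forward τ v w
  · intro h
    have := nlsMid2R_forward (-τ) w v h
    rwa [neg_neg] at this
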